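/- Let R be a positively graded Noetherian domain with R_0 a field, possessing a non-zero-divisor z of degree 1, and let I be a graded ideal of R generated by a subset of R_1 with tr_R(ω_R) ⊇ I. Then for every integer k > 0, the Veronese subalgebra R^(k) satisfies tr_{R^(k)}(ω_{R^(k)}) ⊇ (n_R^{k−1} I)^(k), where n_R is the ideal generated by R_1 and (−)^(k) denotes the k-th Veronese submodule. -/

import Mathlib

/-- The trace ideal of a module. -/
noncomputable def traceIdeal (R M : Type*) [CommRing R] [AddCommGroup M] [Module R M] :
    Ideal R :=
  ⨆ φ : M →ₗ[R] R, LinearMap.range φ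

/-- The k-th Veronese subalgebra R^(k) = ⊕_{i≥0} R_{ik}, realized as the subring
of R generated by the homogeneous components of degrees divisible by k. -/
def veronese (R : Type*) [CommRing R] (𝒜 : ℕ → AddSubgroup R) (k : ℕ) : Subring R :=
  Subring.closure (⋃ i : ℕ, (𝒜 (i * k) : Set R))

/-- The k-th Veronese submodule ω^(k) = ⊕_i ω_{ik} of a ℤ-graded module ω,
as a module over the Veronese subalgebra R^(k). -/
def veroneseSubmodule (R : Type*) [CommRing R] (𝒜 : ℕ → AddSubgroup R) (k : ℕ)
    (ω : Type*) [AddCommGroup ω] [Module R ω] (𝒲 : ℤ → AddSubgroup ω) :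
    Submodule (veronese R 𝒜 k) ω :=
  Submodule.span (veronese R 𝒜 k) (⋃ i : ℤ, (𝒲 (i * (k : ℤ)) : Set ω))


open Pointwise
section Aux

variable {R : Type*} [CommRing R] (𝒜 : ℕ → AddSubgroup R) [GradedRing 𝒜] (k : ℕ)

/-- Projection of `R` onto components of degree divisible by `k`. -/
noncomputable def piK : R →+ R :=
  (DirectSum.toAddMonoid (fun n => if k ∣ n then (𝒜 n).subtype else 0)).comp
    (DirectSum.decomposeAddEquiv 𝒜).toAddMonoidHom

variable {𝒜}

theorem piK_of_mem_dvd {x : R} {n : ℕ} (hx : x ∈ 𝒜 n) (h : k ∣ n) : piK 𝒜 k x = x := by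
  simp [piK, DirectSum.decomposeAddEquiv, DirectSum.decompose_of_mem 𝒜 hx,
    DirectSum.toAddMonoid_of, h]

theorem piK_of_mem_not_dvd {x : R} {n : ℕ} (hx : x ∈ 𝒜 n) (h : ¬ k ∣ n) : piK 𝒜 k x = 0 := by
  simp [piK, DirectSum.decomposeAddEquiv, DirectSum.decompose_of_mem 𝒜 hx,
    DirectSum.toAddMonoid_of, h]

theorem piK_mem_veronese (r : R) : piK 𝒜 k r ∈ veronese R 𝒜 k := by
  induction r using DirectSum.Decomposition.inductionOn 𝒜 with
  | zero => simp only [map_zero]; exact Subring.zero_mem _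
  | @homogeneous n x =>
      by_cases h : k ∣ n
      · rw [piK_of_mem_dvd k x.2 h]
        obtain ⟨i, rfl⟩ := h
        exact Subring.subset_closure (Set.mem_iUnion.2 ⟨i, by rw [mul_comm]; exact x.2⟩)
      · rw [piK_of_mem_not_dvd k x.2 h]; exact Subring.zero_mem _
  | add x y hx hy => rw [map_add]; exact Subring.add_mem _ hx hy

theorem piK_mul_homog {s : R} {m : ℕ} (hs : s ∈ 𝒜 m) (hm : k ∣ m) (r : R) :
    piK 𝒜 k (s * r) = s * piK 𝒜 k r := by
  induction r using DirectSum.Decomposition.inductionOn 𝒜 with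
  | zero => simp
  | @homogeneous n x =>
      have hmul : s * (x : R) ∈ 𝒜 (m + n) := SetLike.mul_mem_graded hs x.2
      by_cases h : k ∣ n
      · rw [piK_of_mem_dvd k x.2 h, piK_of_mem_dvd k hmul (dvd_add hm h)]
      · rw [piK_of_mem_not_dvd k x.2 h, piK_of_mem_not_dvd k hmul (by
          intro hd; exact h ((Nat.dvd_add_right hm).mp hd)), mul_zero]
  | add x y hx hy => rw [mul_add, map_add, map_add, hx, hy, mul_add]

theorem piK_mul_veronese {s : R} (hs : s ∈ veronese R 𝒜 k) (r : R) :
    piK 𝒜 k (s * r) = s * piK 𝒜 k r := by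
  revert r
  induction hs using Subring.closure_induction with
  | mem x hx =>
      obtain ⟨_, ⟨i, rfl⟩, hx⟩ := hx
      exact fun r => piK_mul_homog k hx ⟨i, (mul_comm i k)⟩ r
  | one => simp
  | zero => simp
  | add x y _ _ hx hy => intro r; rw [add_mul, map_add, hx, hy, add_mul]
  | neg x _ hx => intro r; rw [neg_mul, map_neg, hx, neg_mul]
  | mul x y _ _ hx hy => intro r; rw [mul_assoc, hx, hy, mul_assoc]

theorem piK_fix_veronese {s : R} (hs : s ∈ veronese R 𝒜 k) : piK 𝒜 k s = s := by
  have h1 : piK 𝒜 k (1 : R) = 1 := piK_of_mem_dvd k (SetLike.one_mem_graded 𝒜) (dvd_zero k)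
  simpa [h1] using piK_mul_veronese k hs 1

theorem mem_pow_graded {c : R} {m : ℕ} (hc : c ∈ ((𝒜 1 : Set R) ^ m)) : c ∈ 𝒜 m := by
  induction m generalizing c with
  | zero => rw [pow_zero, Set.mem_one] at hc; subst hc; exact SetLike.one_mem_graded 𝒜
  | succ n ih =>
      rw [pow_succ, Set.mem_mul] at hc
      obtain ⟨a, ha, b, hb, rfl⟩ := hc
      exact SetLike.mul_mem_graded (ih ha) hb

end Aux

section Psi

variable {R : Type*} [CommRing R] (𝒜 : ℕ → AddSubgroup R) [GradedRing 𝒜] (k : ℕ)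
variable (ω : Type*) [AddCommGroup ω] [Module R ω] (𝒲 : ℤ → AddSubgroup ω)

/-- The `veronese R 𝒜 k`-linear map `m ↦ π(u * φ m)` from the Veronese submodule
to the Veronese subring. -/
noncomputable def psiMap (u : R) (φ : ω →ₗ[R] R) :
    ↥(veroneseSubmodule R 𝒜 k ω 𝒲) →ₗ[veronese R 𝒜 k] veronese R 𝒜 k where
  toFun m := ⟨piK 𝒜 k (u * φ ↑m), piK_mem_veronese k _⟩
  map_add' m m' := Subtype.ext <| by
    show piK 𝒜 k (u * φ (↑m + ↑m')) = piK 𝒜 k (u * φ ↑m) + piK 𝒜 k (u * φ ↑m')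
    rw [map_add, mul_add, map_add]
  map_smul' s m := Subtype.ext <| by
    show piK 𝒜 k (u * φ ((↑s : R) • ↑m)) = (↑s : R) * piK 𝒜 k (u * φ ↑m)
    rw [map_smul, smul_eq_mul, mul_left_comm, piK_mul_veronese k s.2]

theorem psiMap_mem_trace (u : R) (φ : ω →ₗ[R] R) (m : ↥(veroneseSubmodule R 𝒜 k ω 𝒲)) :
    psiMap 𝒜 k ω 𝒲 u φ m
      ∈ traceIdeal (veronese R 𝒜 k) ↥(veroneseSubmodule R 𝒜 k ω 𝒲) :=
  le_iSup (fun ψ : ↥(veroneseSubmodule R 𝒜 k ω 𝒲) →ₗ[veronese R 𝒜 k] veronese R 𝒜 k =>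
    LinearMap.range ψ) (psiMap 𝒜 k ω 𝒲 u φ) (LinearMap.mem_range_self _ m)

end Psi

/-- Lemma 2.18 of the paper: R a Noetherian positively graded domain
with R₀ a field, z ∈ R₁ a non-zero-divisor, I a graded ideal generated by a subset
of R₁ with tr_R(ω_R) ⊇ I.  Then for every k > 0,
tr_{R^(k)}(ω_{R^(k)}) ⊇ (n_R^{k−1} I)^(k), where n_R is the ideal generated by R₁.
Here ω is the graded canonical module of R (an abstract graded R-module, which for
a domain is isomorphic to a nonzero ideal of R), and—using the known isomorphism
ω_{R^(k)} ≅ (ω_R)^(k)—the canonical module of R^(k) is the Veronese submodule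
ω^(k); the Veronese piece (n_R^{k−1} I)^(k) is the contraction of n_R^{k−1}·I to
the subring R^(k). -/
theorem stmt17 (R : Type*) [CommRing R] [IsDomain R] [IsNoetherianRing R]
    (𝒜 : ℕ → AddSubgroup R) [GradedRing 𝒜]
    (hfield : ∀ x ∈ 𝒜 0, x ≠ 0 → ∃ y ∈ 𝒜 0, x * y = 1)
    (z : R) (hz1 : z ∈ 𝒜 1) (hz : z ∈ nonZeroDivisors R)
    -- ω = ω_R : the graded canonical module of R, isomorphic to a nonzero ideal
    (ω : Type*) [AddCommGroup ω] [Module R ω] [Module.Finite R ω]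
    (𝒲 : ℤ → AddSubgroup ω) [DirectSum.Decomposition 𝒲]
    (hsmul : ∀ (i : ℕ) (j : ℤ) (r : R) (w : ω), r ∈ 𝒜 i → w ∈ 𝒲 j → r • w ∈ 𝒲 (j + i))
    (hcan : ∃ J : Ideal R, J ≠ ⊥ ∧ Nonempty (ω ≃ₗ[R] ↥J))
    (I : Ideal R) (hI : ∃ s : Set R, s ⊆ ↑(𝒜 1) ∧ Ideal.span s = I)
    (htr : I ≤ traceIdeal R ω)
    (k : ℕ) (hk : 0 < k) :
    Ideal.comap (veronese R 𝒜 k).subtype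
        ((Ideal.span (𝒜 1 : Set R)) ^ (k - 1) * I)
      ≤ traceIdeal (veronese R 𝒜 k) ↥(veroneseSubmodule R 𝒜 k ω 𝒲) := by
  classical
  obtain ⟨s, hs1, rfl⟩ := hI
  set S := veronese R 𝒜 k with hS
  set M := veroneseSubmodule R 𝒜 k ω 𝒲 with hM
  -- the ideal is spanned by products of k-1 degree-one elements with elements of s
  have hpow : ∀ n : ℕ, (Ideal.span (𝒜 1 : Set R)) ^ n = Ideal.span ((𝒜 1 : Set R) ^ n) := by
    intro n
    induction n with
    | zero => simp [Ideal.one_eq_top, Ideal.span_one]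
    | succ n ih => rw [pow_succ, pow_succ, ih, Ideal.span_mul_span']
  have hG : (Ideal.span (𝒜 1 : Set R)) ^ (k - 1) * Ideal.span s
      = Ideal.span (((𝒜 1 : Set R) ^ (k - 1)) * s) := by
    rw [hpow, Ideal.span_mul_span']
  -- the core computation
  have core : ∀ x : R, x ∈ traceIdeal R ω → ∀ c ∈ ((𝒜 1 : Set R) ^ (k - 1)),
      (⟨piK 𝒜 k (c * x), piK_mem_veronese k _⟩ : ↥S) ∈ traceIdeal ↥S ↥M := by
    intro x hx
    have hx' : x ∈ ⨆ φ : ω →ₗ[R] R, LinearMap.range φ := hx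
    refine Submodule.iSup_induction (motive := fun x => ∀ c ∈ ((𝒜 1 : Set R) ^ (k - 1)),
      (⟨piK 𝒜 k (c * x), piK_mem_veronese k _⟩ : ↥S) ∈ traceIdeal ↥S ↥M)
      (fun φ : ω →ₗ[R] R => LinearMap.range φ) hx' ?_ ?_ ?_
    · rintro φ x ⟨w, rfl⟩
      induction w using DirectSum.Decomposition.inductionOn 𝒲 with
      | zero =>
          intro c hc
          have : (⟨piK 𝒜 k (c * φ 0), piK_mem_veronese k _⟩ : ↥S) = 0 :=
            Subtype.ext (by show piK 𝒜 k (c * φ 0) = (0 : R); rw [map_zero, mul_zero, map_zero])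
          rw [this]; exact zero_mem _
      | @homogeneous j w =>
          intro c hc
          have hkz : (0 : ℤ) < (k : ℤ) := by exact_mod_cast hk
          set t : ℕ := ((-j) % (k : ℤ)).toNat with ht
          have htnn : (0 : ℤ) ≤ (-j) % (k : ℤ) := Int.emod_nonneg _ (by omega)
          have htc : (t : ℤ) = (-j) % (k : ℤ) := Int.toNat_of_nonneg htnn
          have htlt : ((-j) % (k : ℤ)) < k := Int.emod_lt_of_pos _ hkz
          have htle : t ≤ k - 1 := by omega
          have hsplit : k - 1 = t + (k - 1 - t) := by omega
          rw [hsplit, pow_add, Set.mem_mul] at hc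
          obtain ⟨c₁, hc₁, c₂, hc₂, rfl⟩ := hc
          have hc₁A : c₁ ∈ 𝒜 t := mem_pow_graded hc₁
          have hdvd : j + (t : ℤ) = (k : ℤ) * (-((-j) / (k : ℤ))) := by
            rw [htc, Int.emod_def]; ring
          have hm0 : c₁ • (w : ω) ∈ 𝒲 ((-((-j) / (k : ℤ))) * (k : ℤ)) := by
            have := hsmul t j c₁ (w : ω) hc₁A w.2
            rwa [hdvd, mul_comm] at this
          have hm0M : c₁ • (w : ω) ∈ M :=
            Submodule.subset_span (Set.mem_iUnion.2 ⟨_, hm0⟩)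
          have heq : (⟨piK 𝒜 k (c₁ * c₂ * φ (w : ω)), piK_mem_veronese k _⟩ : ↥S)
              = psiMap 𝒜 k ω 𝒲 c₂ φ ⟨c₁ • (w : ω), hm0M⟩ := by
            refine Subtype.ext ?_
            show piK 𝒜 k (c₁ * c₂ * φ (w : ω)) = piK 𝒜 k (c₂ * φ (c₁ • (w : ω)))
            rw [map_smul, smul_eq_mul]; ring_nf
          rw [heq]
          exact psiMap_mem_trace 𝒜 k ω 𝒲 c₂ φ _
      | add w w' hw hw' =>
          intro c hc
          have : (⟨piK 𝒜 k (c * φ (w + w')), piK_mem_veronese k _⟩ : ↥S)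
              = ⟨piK 𝒜 k (c * φ w), piK_mem_veronese k _⟩
                + ⟨piK 𝒜 k (c * φ w'), piK_mem_veronese k _⟩ :=
            Subtype.ext (by push_cast; rw [map_add, mul_add, map_add])
          rw [this]; exact add_mem (hw c hc) (hw' c hc)
    · intro c hc
      have : (⟨piK 𝒜 k (c * 0), piK_mem_veronese k _⟩ : ↥S) = 0 :=
        Subtype.ext (by show piK 𝒜 k (c * 0) = (0 : R); rw [mul_zero, map_zero])
      rw [this]; exact zero_mem _
    · intro x y hx hy c hc
      have : (⟨piK 𝒜 k (c * (x + y)), piK_mem_veronese k _⟩ : ↥S)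
          = ⟨piK 𝒜 k (c * x), piK_mem_veronese k _⟩
            + ⟨piK 𝒜 k (c * y), piK_mem_veronese k _⟩ :=
        Subtype.ext (by push_cast; rw [mul_add, map_add])
      rw [this]; exact add_mem (hx c hc) (hy c hc)
  -- main reduction via the projection piK
  intro a ha
  rw [Ideal.mem_comap, hG] at ha
  have key : ∀ b : R, b ∈ Ideal.span (((𝒜 1 : Set R) ^ (k - 1)) * s) → ∀ r : R,
      (⟨piK 𝒜 k (r * b), piK_mem_veronese k _⟩ : ↥S) ∈ traceIdeal ↥S ↥M := by
    intro b hb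
    induction hb using Submodule.span_induction with
    | mem g hg =>
        obtain ⟨c, hc, x, hxs, rfl⟩ := Set.mem_mul.1 hg
        intro r
        have hgA : c * x ∈ 𝒜 k := by
          have := SetLike.mul_mem_graded (mem_pow_graded hc) (hs1 hxs)
          rwa [Nat.sub_add_cancel hk] at this
        have hgS : c * x ∈ S := by
          refine Subring.subset_closure (Set.mem_iUnion.2 ⟨1, ?_⟩)
          rwa [one_mul]
        have hgtr : (⟨c * x, hgS⟩ : ↥S) ∈ traceIdeal ↥S ↥M := by
          have h1 := core x (htr (Ideal.subset_span hxs)) c hc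
          have h2 : (⟨piK 𝒜 k (c * x), piK_mem_veronese k _⟩ : ↥S) = ⟨c * x, hgS⟩ :=
            Subtype.ext (piK_of_mem_dvd k hgA dvd_rfl)
          rwa [h2] at h1
        have h3 : (⟨piK 𝒜 k (r * (c * x)), piK_mem_veronese k _⟩ : ↥S)
            = (⟨c * x, hgS⟩ : ↥S) * ⟨piK 𝒜 k r, piK_mem_veronese k _⟩ := by
          refine Subtype.ext ?_
          show piK 𝒜 k (r * (c * x)) = (c * x) * piK 𝒜 k r
          rw [mul_comm r, piK_mul_homog k hgA dvd_rfl]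
        rw [h3]
        exact Ideal.mul_mem_right _ _ hgtr
    | zero =>
        intro r
        have : (⟨piK 𝒜 k (r * 0), piK_mem_veronese k _⟩ : ↥S) = 0 :=
          Subtype.ext (by show piK 𝒜 k (r * 0) = (0 : R); rw [mul_zero, map_zero])
        rw [this]; exact zero_mem _
    | add b b' _ _ hb hb' =>
        intro r
        have : (⟨piK 𝒜 k (r * (b + b')), piK_mem_veronese k _⟩ : ↥S)
            = ⟨piK 𝒜 k (r * b), piK_mem_veronese k _⟩
              + ⟨piK 𝒜 k (r * b'), piK_mem_veronese k _⟩ :=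
          Subtype.ext (by push_cast; rw [mul_add, map_add])
        rw [this]; exact add_mem (hb r) (hb' r)
    | smul r' b _ hb =>
        intro r
        have : (⟨piK 𝒜 k (r * (r' • b)), piK_mem_veronese k _⟩ : ↥S)
            = ⟨piK 𝒜 k ((r * r') * b), piK_mem_veronese k _⟩ :=
          Subtype.ext (by rw [smul_eq_mul]; ring_nf)
        rw [this]; exact hb (r * r')
  have hfin := key (↑a) ha 1
  have : (⟨piK 𝒜 k (1 * ↑a), piK_mem_veronese k _⟩ : ↥S) = a :=
    Subtype.ext (by rw [one_mul]; exact piK_fix_veronese k a.2)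
  rwa [this] at hfin
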